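/- Hardy's inequality: for n ≥ 3 and f ∈ Ḣ¹(ℝⁿ), one has ‖f(x)/|x|‖_{L²(ℝⁿ)} ≲ ‖∇f‖_{L²(ℝⁿ)}. -/

import Mathlib

open Set Metric MeasureTheory Measure ENNReal SchwartzMap Filter

noncomputable section

section Polar

variable {E : Type*} [NormedAddCommGroup E] [NormedSpace ℝ E] [MeasurableSpace E] [BorelSpace E]
  [FiniteDimensional ℝ E] [Nontrivial E]

lemma lintegral_polar (μ : Measure E) [μ.IsAddHaarMeasure] (G : E → ℝ≥0∞) (hG : Measurable G) :
    ∫⁻ x, G x ∂μ = ∫⁻ ω : sphere (0:E) 1, ∫⁻ r in Ioi (0:ℝ),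
      ENNReal.ofReal (r ^ (Module.finrank ℝ E - 1)) * G (r • (ω:E)) ∂volume ∂μ.toSphere := by
  have h1 : ∫⁻ x, G x ∂μ = ∫⁻ x : ({0}ᶜ : Set E), G x ∂(μ.comap Subtype.val) := by
    rw [lintegral_subtype_comap (measurableSet_singleton _).compl, restrict_compl_singleton]
  rw [h1]
  have h2 : ∫⁻ x : ({0}ᶜ : Set E), G x ∂(μ.comap Subtype.val)
      = ∫⁻ p : sphere (0:E) 1 × Ioi (0:ℝ), G ((p.2 : ℝ) • (p.1 : E))
        ∂(μ.toSphere.prod (volumeIoiPow (Module.finrank ℝ E - 1))) := by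
    rw [← (μ.measurePreserving_homeomorphUnitSphereProd).lintegral_comp
      (by exact hG.comp (by fun_prop))]
    refine lintegral_congr fun x => ?_
    simp [smul_inv_smul₀ (norm_ne_zero_iff.2 x.2)]
  rw [h2, lintegral_prod _ (by exact (hG.comp (by fun_prop)).aemeasurable)]
  refine lintegral_congr fun ω => ?_
  rw [Measure.volumeIoiPow, lintegral_withDensity_eq_lintegral_mul _ (by fun_prop)
    (by exact hG.comp (by fun_prop))]
  simp only [Pi.mul_apply]
  exact lintegral_subtype_comap measurableSet_Ioi
    (fun r => ENNReal.ofReal (r ^ (Module.finrank ℝ E - 1)) * G (r • (ω:E)))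



end Polar

variable {E : Type*} [NormedAddCommGroup E] [NormedSpace ℝ E]

-- derivative of the ray restriction
lemma ray_hasDerivAt (f : SchwartzMap E ℂ) (ω : E) (r : ℝ) :
    HasDerivAt (fun t : ℝ => f (t • ω)) (fderiv ℝ f (r • ω) ω) r := by
  have h1 : HasDerivAt (fun t : ℝ => t • ω) ω r := by
    simpa using (hasDerivAt_id r).smul_const ω
  exact (f.differentiableAt.hasFDerivAt).comp_hasDerivAt r h1

-- norm squared as re/im
lemma norm_sq_complex (z : ℂ) : ‖z‖ ^ 2 = z.re ^ 2 + z.im ^ 2 := by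
  rw [← Complex.normSq_eq_norm_sq, Complex.normSq_apply]; ring

-- derivative of ‖g‖²
lemma hasDerivAt_norm_sq {g : ℝ → ℂ} {g' : ℂ} {r : ℝ} (h : HasDerivAt g g' r) :
    HasDerivAt (fun t => ‖g t‖ ^ 2)
      (2 * ((g r).re * g'.re + (g r).im * g'.im)) r := by
  have hu : HasDerivAt (fun t => (g t).re) g'.re r :=
    (Complex.reCLM.hasFDerivAt.comp_hasDerivAt r h)
  have hv : HasDerivAt (fun t => (g t).im) g'.im r :=
    (Complex.imCLM.hasFDerivAt.comp_hasDerivAt r h)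
  have := ((hu.pow 2).add (hv.pow 2))
  have heq : ((fun t => (g t).re) ^ 2 + (fun t => (g t).im) ^ 2) = fun t => ‖g t‖ ^ 2 := by
    funext t; simp only [Pi.add_apply, Pi.pow_apply]; rw [norm_sq_complex]
  rw [heq] at this
  exact this.congr_deriv (by push_cast; ring)

lemma cs_pointwise (z w : ℂ) : |z.re * w.re + z.im * w.im| ≤ ‖z‖ * ‖w‖ := by
  have h1 : (z.re * w.re + z.im * w.im) ^ 2 ≤ (‖z‖ * ‖w‖) ^ 2 := by
    rw [mul_pow, norm_sq_complex, norm_sq_complex]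
    nlinarith [sq_nonneg (z.re * w.im - z.im * w.re)]
  calc |z.re * w.re + z.im * w.im| = Real.sqrt ((z.re * w.re + z.im * w.im) ^ 2) := by
        rw [Real.sqrt_sq_eq_abs]
    _ ≤ Real.sqrt ((‖z‖ * ‖w‖) ^ 2) := Real.sqrt_le_sqrt h1
    _ = ‖z‖ * ‖w‖ := Real.sqrt_sq (by positivity)





/-- Decay along a ray. -/
lemma ray_decay {V : Type*} [NormedAddCommGroup V] [NormedSpace ℝ V]
    (h : SchwartzMap E V) {ω : E} (hω : ‖ω‖ = 1) (k : ℕ) :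
    ∃ C > 0, ∀ r : ℝ, 0 < r → ‖h (r • ω)‖ ≤ C / r ^ k := by
  obtain ⟨C, hC, hb⟩ := h.decay k 0
  refine ⟨C, hC, fun r hr => ?_⟩
  have := hb (r • ω)
  rw [norm_iteratedFDeriv_zero, norm_smul, hω, mul_one, Real.norm_eq_abs,
    abs_of_pos hr] at this
  rw [le_div_iff₀ (by positivity), mul_comm]
  exact this

lemma ray_bound {V : Type*} [NormedAddCommGroup V] [NormedSpace ℝ V]
    (h : SchwartzMap E V) : ∃ C > 0, ∀ x : E, ‖h x‖ ≤ C := by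
  obtain ⟨C, hC, hb⟩ := h.decay 0 0
  exact ⟨C, hC, fun x => by simpa [norm_iteratedFDeriv_zero] using hb x⟩

/-- Integrability of `r^k * (‖h₁(rω)‖ * ‖h₂(rω)‖)` on `(0,∞)`. -/
lemma ray_integrable {V W : Type*} [NormedAddCommGroup V] [NormedSpace ℝ V]
    [NormedAddCommGroup W] [NormedSpace ℝ W]
    (h₁ : SchwartzMap E V) (h₂ : SchwartzMap E W) {ω : E} (hω : ‖ω‖ = 1) (k : ℕ) :
    IntegrableOn (fun r : ℝ => r ^ k * (‖h₁ (r • ω)‖ * ‖h₂ (r • ω)‖)) (Ioi 0) := by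
  have hcont : Continuous fun r : ℝ => r ^ k * (‖h₁ (r • ω)‖ * ‖h₂ (r • ω)‖) := by
    fun_prop
  have h01 : IntegrableOn (fun r : ℝ => r ^ k * (‖h₁ (r • ω)‖ * ‖h₂ (r • ω)‖)) (Ioc 0 1) :=
    hcont.integrableOn_Ioc
  obtain ⟨C₀, hC₀, hb₀⟩ := ray_bound h₁
  obtain ⟨C₂, hC₂, hb₂⟩ := ray_decay h₂ hω (k + 2)
  have h1i : IntegrableOn (fun r : ℝ => r ^ k * (‖h₁ (r • ω)‖ * ‖h₂ (r • ω)‖)) (Ioi 1) := by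
    refine Integrable.mono' (g := fun r : ℝ => C₀ * C₂ * r ^ (-2 : ℝ))
      (((integrableOn_Ioi_rpow_of_lt (by norm_num) one_pos)).const_mul _)
      hcont.aestronglyMeasurable ?_
    filter_upwards [ae_restrict_mem measurableSet_Ioi] with r hr
    have hr1 : (1 : ℝ) ≤ r := le_of_lt hr
    have hr0 : (0 : ℝ) < r := lt_of_lt_of_le one_pos hr1
    have hd := hb₂ r hr0
    have key : r ^ k * (‖h₁ (r • ω)‖ * ‖h₂ (r • ω)‖) ≤ C₀ * C₂ * r ^ (-2 : ℝ) := by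
      rw [Real.rpow_neg hr0.le, Real.rpow_two]
      calc r ^ k * (‖h₁ (r • ω)‖ * ‖h₂ (r • ω)‖)
          ≤ r ^ k * (C₀ * (C₂ / r ^ (k + 2))) := by
            apply mul_le_mul_of_nonneg_left _ (by positivity)
            exact mul_le_mul (hb₀ _) hd (norm_nonneg _) hC₀.le
        _ = C₀ * C₂ * (r ^ k / r ^ (k + 2)) := by ring
        _ = C₀ * C₂ * (r ^ 2)⁻¹ := by
            congr 1
            rw [pow_add, div_eq_iff (by positivity)]
            field_simp
    rwa [Real.norm_eq_abs, abs_of_nonneg (by positivity)]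
  have := h01.union h1i
  rwa [Ioc_union_Ioi_eq_Ioi (zero_le_one)] at this





lemma hardy_1d_real (n : ℕ) (hn : 3 ≤ n) (f : SchwartzMap E ℂ) {ω : E} (hω : ‖ω‖ = 1) :
    ∫ r in Ioi (0:ℝ), r ^ (n-3) * ‖f (r • ω)‖ ^ 2 ≤
      (2 / ((n:ℝ) - 2)) * ∫ r in Ioi (0:ℝ),
        r ^ (n-2) * (‖f (r • ω)‖ * ‖(SchwartzMap.fderivCLM ℝ E ℂ f) (r • ω)‖) := by
  set c : ℝ := (n:ℝ) - 2 with hc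
  have hc0 : 0 < c := by
    have : (3:ℝ) ≤ n := by exact_mod_cast hn
    linarith
  set Df := SchwartzMap.fderivCLM ℝ E ℂ f with hDf
  have hDfapp : ∀ x : E, Df x = fderiv ℝ f x := fun x => SchwartzMap.fderivCLM_apply (𝕜 := ℝ) f x
  set g : ℝ → ℂ := fun r => f (r • ω) with hg
  set T2 : ℝ → ℝ := fun r => (r ^ (n-2) *
    (2 * ((g r).re * (fderiv ℝ f (r • ω) ω).re + (g r).im * (fderiv ℝ f (r • ω) ω).im))) / c
    with hT2
  set T1 : ℝ → ℝ := fun r => r ^ (n-3) * ‖g r‖ ^ 2 with hT1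
  set F : ℝ → ℝ := fun r => (r ^ (n-2) * ‖g r‖ ^ 2) / c with hF
  -- continuity facts
  have hgc : Continuous g := f.continuous.comp (by fun_prop)
  have hfd : Continuous fun r : ℝ => fderiv ℝ f (r • ω) := by
    have : Continuous (fderiv ℝ f) := ((f.smooth ⊤).continuous_fderiv (by norm_num))
    exact this.comp (by fun_prop)
  have hfda : Continuous fun r : ℝ => fderiv ℝ f (r • ω) ω :=
    hfd.clm_apply continuous_const
  -- integrability of T1
  have hT1int : IntegrableOn T1 (Ioi 0) := by
    have := ray_integrable f f hω (n-3)
    refine this.congr_fun (fun r _ => ?_) measurableSet_Ioi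
    simp [hT1, hg, sq]
  -- integrability of T2
  have hbnd : ∀ r : ℝ, |T2 r| ≤ (2 / c) * (r ^ (n-2) * (‖f (r • ω)‖ * ‖Df (r • ω)‖)) ∨ True :=
    fun _ => Or.inr trivial
  have hT2le : ∀ r : ℝ, 0 < r → |T2 r| ≤ (2 / c) * (r ^ (n-2) * (‖f (r • ω)‖ * ‖Df (r • ω)‖)) := by
    intro r hr
    have h1 : |(g r).re * (fderiv ℝ f (r • ω) ω).re + (g r).im * (fderiv ℝ f (r • ω) ω).im|
        ≤ ‖g r‖ * ‖fderiv ℝ f (r • ω) ω‖ := cs_pointwise _ _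
    have h2 : ‖fderiv ℝ f (r • ω) ω‖ ≤ ‖Df (r • ω)‖ := by
      rw [hDfapp]
      calc ‖fderiv ℝ f (r • ω) ω‖ ≤ ‖fderiv ℝ f (r • ω)‖ * ‖ω‖ :=
        (fderiv ℝ f (r • ω)).le_opNorm ω
      _ = ‖fderiv ℝ f (r • ω)‖ := by rw [hω, mul_one]
    have hrn : (0:ℝ) ≤ r ^ (n-2) := by positivity
    calc |T2 r| = (r ^ (n-2) *
        |2 * ((g r).re * (fderiv ℝ f (r • ω) ω).re + (g r).im * (fderiv ℝ f (r • ω) ω).im)|) / c := by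
          rw [hT2, abs_div, abs_of_pos hc0, abs_mul, abs_of_nonneg hrn]
      _ ≤ (r ^ (n-2) * (2 * (‖g r‖ * ‖Df (r • ω)‖))) / c := by
          gcongr
          calc |2 * ((g r).re * (fderiv ℝ f (r • ω) ω).re + (g r).im * (fderiv ℝ f (r • ω) ω).im)|
              = 2 * |(g r).re * (fderiv ℝ f (r • ω) ω).re + (g r).im * (fderiv ℝ f (r • ω) ω).im| := by
                rw [abs_mul]; norm_num
            _ ≤ 2 * (‖g r‖ * ‖fderiv ℝ f (r • ω) ω‖) := mul_le_mul_of_nonneg_left h1 (by norm_num)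
            _ ≤ 2 * (‖g r‖ * ‖Df (r • ω)‖) := by gcongr
      _ = (2 / c) * (r ^ (n-2) * (‖f (r • ω)‖ * ‖Df (r • ω)‖)) := by rw [hg]; ring
  have hT2cont : Continuous T2 :=
    (((continuous_pow (n-2)).mul (continuous_const.mul
      (((Complex.continuous_re.comp hgc).mul (Complex.continuous_re.comp hfda)).add
       ((Complex.continuous_im.comp hgc).mul (Complex.continuous_im.comp hfda))))).div_const c)
  have hbint : IntegrableOn
      (fun r : ℝ => (2 / c) * (r ^ (n-2) * (‖f (r • ω)‖ * ‖Df (r • ω)‖))) (Ioi 0) :=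
    (ray_integrable f Df hω (n-2)).const_mul _
  have hT2int : IntegrableOn T2 (Ioi 0) := by
    refine Integrable.mono' hbint hT2cont.aestronglyMeasurable ?_
    filter_upwards [ae_restrict_mem measurableSet_Ioi] with r hr
    rw [Real.norm_eq_abs]
    exact hT2le r hr
  have hcast : ((n - 2 : ℕ) : ℝ) = c := by
    rw [hc, Nat.cast_sub (by omega)]; norm_num
  have hFderiv : ∀ r ∈ Ioi (0:ℝ), HasDerivAt F (T1 r + T2 r) r := by
    intro r hr
    have h1 : HasDerivAt (fun t : ℝ => t ^ (n-2)) (((n-2 : ℕ) : ℝ) * r ^ (n-3)) r := by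
      have := hasDerivAt_pow (n-2) r
      have hnn : n - 2 - 1 = n - 3 := by omega
      rwa [hnn] at this
    have h2 := hasDerivAt_norm_sq (ray_hasDerivAt f ω r)
    have h3 := (h1.mul h2).div_const c
    refine h3.congr_deriv ?_
    rw [hT1, hT2, hcast]
    field_simp
    ring
  have hcont0 : ContinuousWithinAt F (Ici (0:ℝ)) 0 :=
    (((continuous_pow (n-2)).mul ((hgc.norm).pow 2)).div_const c).continuousWithinAt
  have hF0 : F 0 = 0 := by
    simp [hF, zero_pow (show n - 2 ≠ 0 by omega)]
  have htend : Tendsto F atTop (nhds 0) := by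
    obtain ⟨C, hC, hdec⟩ := ray_decay f hω (n-1)
    obtain ⟨C₀, hC₀, hb0⟩ := ray_bound f
    have hlim : Tendsto (fun r : ℝ => (C₀ * C / c) * r⁻¹) atTop (nhds 0) := by
      simpa using tendsto_inv_atTop_zero.const_mul (C₀ * C / c)
    refine squeeze_zero_norm' ?_ hlim
    filter_upwards [eventually_gt_atTop (0:ℝ)] with r hr
    have h1 : ‖g r‖ ^ 2 ≤ C₀ * (C / r ^ (n-1)) := by
      have := mul_le_mul (hb0 (r • ω)) (hdec r hr) (norm_nonneg _) hC₀.le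
      calc ‖g r‖ ^ 2 = ‖f (r • ω)‖ * ‖f (r • ω)‖ := by rw [hg, sq]
        _ ≤ C₀ * (C / r ^ (n-1)) := this
    have hrpow : r ^ (n-2) / r ^ (n-1) = r⁻¹ := by
      have : n - 1 = (n - 2) + 1 := by omega
      rw [this, pow_succ]
      field_simp
    rw [Real.norm_eq_abs, hF, abs_div, abs_of_pos hc0, abs_mul,
      abs_of_nonneg (by positivity : (0:ℝ) ≤ r ^ (n-2)), abs_of_nonneg (by positivity)]
    calc r ^ (n-2) * ‖g r‖ ^ 2 / c ≤ r ^ (n-2) * (C₀ * (C / r ^ (n-1))) / c := by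
          gcongr
      _ = (C₀ * C / c) * (r ^ (n-2) / r ^ (n-1)) := by ring
      _ = (C₀ * C / c) * r⁻¹ := by rw [hrpow]
  have hkey : ∫ r in Ioi (0:ℝ), (T1 r + T2 r) = 0 - F 0 :=
    integral_Ioi_of_hasDerivAt_of_tendsto hcont0 hFderiv (hT1int.add hT2int) htend
  rw [hF0, sub_zero] at hkey
  rw [integral_add hT1int hT2int] at hkey
  have habs : ∫ r in Ioi (0:ℝ), T1 r ≤ |∫ r in Ioi (0:ℝ), T2 r| := by
    rw [add_eq_zero_iff_eq_neg] at hkey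
    rw [hkey]
    exact neg_le_abs _
  have habs2 : |∫ r in Ioi (0:ℝ), T2 r| ≤ ∫ r in Ioi (0:ℝ), |T2 r| := by
    simpa [Real.norm_eq_abs] using norm_integral_le_integral_norm (μ := volume.restrict (Ioi 0)) T2
  have habs3 : ∫ r in Ioi (0:ℝ), |T2 r| ≤
      ∫ r in Ioi (0:ℝ), (2 / c) * (r ^ (n-2) * (‖f (r • ω)‖ * ‖Df (r • ω)‖)) := by
    refine integral_mono_ae hT2int.abs hbint ?_
    filter_upwards [ae_restrict_mem measurableSet_Ioi] with r hr
    exact hT2le r hr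
  have : ∫ r in Ioi (0:ℝ), T1 r ≤
      (2 / c) * ∫ r in Ioi (0:ℝ), r ^ (n-2) * (‖f (r • ω)‖ * ‖Df (r • ω)‖) := by
    rw [← integral_const_mul]
    exact (habs.trans habs2).trans habs3
  exact this





lemma hardy_1d_ennreal (n : ℕ) (hn : 3 ≤ n) (f : SchwartzMap E ℂ) {ω : E} (hω : ‖ω‖ = 1) :
    ∫⁻ r in Ioi (0:ℝ), ENNReal.ofReal (r ^ (n-3) * ‖f (r • ω)‖ ^ 2) ≤
      ENNReal.ofReal ((2 / ((n:ℝ) - 2)) ^ 2) *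
        ∫⁻ r in Ioi (0:ℝ), ENNReal.ofReal (r ^ (n-1) * ‖(SchwartzMap.fderivCLM ℝ E ℂ f) (r • ω)‖ ^ 2) := by
  set c : ℝ := 2 / ((n:ℝ) - 2) with hc
  have hn2 : (0:ℝ) < (n:ℝ) - 2 := by
    have : (3:ℝ) ≤ n := by exact_mod_cast hn
    linarith
  have hcpos : 0 < c := by positivity
  set Df := SchwartzMap.fderivCLM ℝ E ℂ f with hDf
  -- the three lintegrals
  set L := ∫⁻ r in Ioi (0:ℝ), ENNReal.ofReal (r ^ (n-3) * ‖f (r • ω)‖ ^ 2) with hL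
  set B := ∫⁻ r in Ioi (0:ℝ), ENNReal.ofReal (r ^ (n-1) * ‖Df (r • ω)‖ ^ 2) with hB
  -- real integrals
  have hT1int : IntegrableOn (fun r : ℝ => r ^ (n-3) * ‖f (r • ω)‖ ^ 2) (Ioi 0) := by
    refine (ray_integrable f f hω (n-3)).congr_fun (fun r _ => ?_) measurableSet_Ioi
    simp [sq]
  have hmint : IntegrableOn (fun r : ℝ => r ^ (n-2) * (‖f (r • ω)‖ * ‖Df (r • ω)‖)) (Ioi 0) :=
    ray_integrable f Df hω (n-2)
  have hLA : L = ENNReal.ofReal (∫ r in Ioi (0:ℝ), r ^ (n-3) * ‖f (r • ω)‖ ^ 2) := by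
    rw [hL, ← ofReal_integral_eq_lintegral_ofReal hT1int ?_]
    filter_upwards [ae_restrict_mem measurableSet_Ioi] with r hr
    have hr0 : (0:ℝ) < r := hr
    positivity
  have hMM : (∫⁻ r in Ioi (0:ℝ), ENNReal.ofReal (r ^ (n-2) * (‖f (r • ω)‖ * ‖Df (r • ω)‖)))
      = ENNReal.ofReal (∫ r in Ioi (0:ℝ), r ^ (n-2) * (‖f (r • ω)‖ * ‖Df (r • ω)‖)) := by
    rw [← ofReal_integral_eq_lintegral_ofReal hmint ?_]
    filter_upwards [ae_restrict_mem measurableSet_Ioi] with r hr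
    have hr0 : (0:ℝ) < r := hr
    positivity
  -- Cauchy-Schwarz at the lintegral level
  set φ : ℝ → ℝ≥0∞ := fun r => ENNReal.ofReal (Real.sqrt (r ^ (n-3)) * ‖f (r • ω)‖) with hφ
  set ψ : ℝ → ℝ≥0∞ := fun r => ENNReal.ofReal (Real.sqrt (r ^ (n-1)) * ‖Df (r • ω)‖) with hψ
  have hφm : AEMeasurable φ (volume.restrict (Ioi 0)) := by
    apply Continuous.aemeasurable
    exact ENNReal.continuous_ofReal.comp
      (((Real.continuous_sqrt.comp (continuous_pow _))).mul
        ((f.continuous.comp (by fun_prop)).norm))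
  have hψm : AEMeasurable ψ (volume.restrict (Ioi 0)) := by
    apply Continuous.aemeasurable
    exact ENNReal.continuous_ofReal.comp
      (((Real.continuous_sqrt.comp (continuous_pow _))).mul
        ((Df.continuous.comp (by fun_prop)).norm))
  have hconj : Real.HolderConjugate 2 2 := Real.HolderConjugate.two_two
  have hcs := ENNReal.lintegral_mul_le_Lp_mul_Lq (volume.restrict (Ioi 0)) hconj hφm hψm
  -- identify the three pieces
  have hφψ : ∀ r ∈ Ioi (0:ℝ), (φ * ψ) r
      = ENNReal.ofReal (r ^ (n-2) * (‖f (r • ω)‖ * ‖Df (r • ω)‖)) := by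
    intro r hr
    have hr0 : (0:ℝ) ≤ r := (le_of_lt hr)
    have hsq : Real.sqrt (r ^ (n-3)) * Real.sqrt (r ^ (n-1)) = r ^ (n-2) := by
      rw [← Real.sqrt_mul (by positivity), ← pow_add]
      have : n - 3 + (n - 1) = 2 * (n - 2) := by omega
      rw [this, pow_mul', Real.sqrt_sq_eq_abs, abs_of_nonneg (by positivity)]
    simp only [Pi.mul_apply, hφ, hψ]
    rw [← ENNReal.ofReal_mul (by positivity)]
    congr 1
    calc Real.sqrt (r ^ (n-3)) * ‖f (r • ω)‖ * (Real.sqrt (r ^ (n-1)) * ‖Df (r • ω)‖)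
        = (Real.sqrt (r ^ (n-3)) * Real.sqrt (r ^ (n-1))) * (‖f (r • ω)‖ * ‖Df (r • ω)‖) := by ring
      _ = r ^ (n-2) * (‖f (r • ω)‖ * ‖Df (r • ω)‖) := by rw [hsq]
  have hφ2 : ∀ r ∈ Ioi (0:ℝ), φ r ^ (2:ℝ) = ENNReal.ofReal (r ^ (n-3) * ‖f (r • ω)‖ ^ 2) := by
    intro r hr
    have hr0 : (0:ℝ) < r := hr
    rw [hφ, ENNReal.ofReal_rpow_of_nonneg (by positivity) (by norm_num)]
    congr 1
    rw [Real.rpow_two, mul_pow, Real.sq_sqrt (by positivity)]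
  have hψ2 : ∀ r ∈ Ioi (0:ℝ), ψ r ^ (2:ℝ) = ENNReal.ofReal (r ^ (n-1) * ‖Df (r • ω)‖ ^ 2) := by
    intro r hr
    have hr0 : (0:ℝ) < r := hr
    rw [hψ, ENNReal.ofReal_rpow_of_nonneg (by positivity) (by norm_num)]
    congr 1
    rw [Real.rpow_two, mul_pow, Real.sq_sqrt (by positivity)]
  rw [setLIntegral_congr_fun measurableSet_Ioi hφψ,
      setLIntegral_congr_fun measurableSet_Ioi hφ2,
      setLIntegral_congr_fun measurableSet_Ioi hψ2] at hcs
  rw [hMM] at hcs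
  -- real Hardy inequality
  have hreal := hardy_1d_real n hn f hω
  have hLle : L ≤ ENNReal.ofReal c * ENNReal.ofReal
      (∫ r in Ioi (0:ℝ), r ^ (n-2) * (‖f (r • ω)‖ * ‖Df (r • ω)‖)) := by
    rw [hLA, ← ENNReal.ofReal_mul hcpos.le]
    exact ENNReal.ofReal_le_ofReal hreal
  have hchain : L ≤ ENNReal.ofReal c * (L ^ (1/2 : ℝ) * B ^ (1/2 : ℝ)) :=
    hLle.trans (mul_le_mul_right hcs _)
  -- conclude
  by_cases hB0 : B = ⊤
  · rw [hB0, ENNReal.mul_top]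
    · exact le_top
    · simp only [ne_eq, ENNReal.ofReal_eq_zero, not_le]
      positivity
  by_cases hL0 : L = 0
  · rw [hL0]; exact zero_le
  have hLne : L ≠ ⊤ := by rw [hLA]; exact ENNReal.ofReal_ne_top
  have hLhne : L ^ (1/2 : ℝ) ≠ 0 := by
    simp [ENNReal.rpow_eq_zero_iff, hL0, hLne]
  have hLhnt : L ^ (1/2 : ℝ) ≠ ⊤ := by
    simp [ENNReal.rpow_eq_top_iff, hL0, hLne]
  have hsplit : L = L ^ (1/2 : ℝ) * L ^ (1/2 : ℝ) := by
    rw [← ENNReal.rpow_add _ _ hL0 hLne]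
    norm_num
  have hhalf : L ^ (1/2 : ℝ) ≤ ENNReal.ofReal c * B ^ (1/2 : ℝ) := by
    have h1 : L ^ (1/2 : ℝ) * L ^ (1/2 : ℝ) ≤
        (ENNReal.ofReal c * B ^ (1/2 : ℝ)) * L ^ (1/2 : ℝ) := by
      calc L ^ (1/2 : ℝ) * L ^ (1/2 : ℝ) = L := hsplit.symm
        _ ≤ ENNReal.ofReal c * (L ^ (1/2 : ℝ) * B ^ (1/2 : ℝ)) := hchain
        _ = (ENNReal.ofReal c * B ^ (1/2 : ℝ)) * L ^ (1/2 : ℝ) := by ring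
    exact (ENNReal.mul_le_mul_iff_left hLhne hLhnt).mp h1
  calc L = (L ^ (1/2 : ℝ)) ^ 2 := by
        rw [← ENNReal.rpow_natCast (L ^ (1/2:ℝ)) 2, ← ENNReal.rpow_mul]
        norm_num
    _ ≤ (ENNReal.ofReal c * B ^ (1/2 : ℝ)) ^ 2 := by
        exact pow_le_pow_left' hhalf 2
    _ = ENNReal.ofReal (c ^ 2) * B := by
        rw [mul_pow, ← ENNReal.ofReal_pow hcpos.le]
        congr 1
        rw [← ENNReal.rpow_natCast (B ^ (1/2:ℝ)) 2, ← ENNReal.rpow_mul]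
        norm_num




/-- Hardy's inequality in dimension `n ≥ 3`:
`‖f(x)/|x|‖_{L²} ≲ ‖∇f‖_{L²}` for Schwartz `f`. -/
theorem stmt2 (n : ℕ) (hn : 3 ≤ n) :
    ∃ C > 0, ∀ f : SchwartzMap (EuclideanSpace ℝ (Fin n)) ℂ,
      Real.sqrt (∫ x : EuclideanSpace ℝ (Fin n), ‖f x‖ ^ 2 / ‖x‖ ^ 2) ≤
        C * Real.sqrt (∫ x : EuclideanSpace ℝ (Fin n), ‖fderiv ℝ (⇑f) x‖ ^ 2) := by
  set E := EuclideanSpace ℝ (Fin n) with hE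
  haveI : Nonempty (Fin n) := ⟨⟨0, by omega⟩⟩
  haveI : Nontrivial E := by
    refine ⟨EuclideanSpace.single ⟨0, by omega⟩ 1, 0, fun h => ?_⟩
    have h2 : (EuclideanSpace.single (⟨0, by omega⟩ : Fin n) (1:ℝ)) ⟨0, by omega⟩ = (0 : E) ⟨0, by omega⟩ := by rw [h]
    rw [EuclideanSpace.single_apply, if_pos rfl] at h2
    exact one_ne_zero h2
  set c : ℝ := 2 / ((n:ℝ) - 2) with hc
  have hn2 : (0:ℝ) < (n:ℝ) - 2 := by
    have : (3:ℝ) ≤ n := by exact_mod_cast hn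
    linarith
  have hcpos : 0 < c := by positivity
  refine ⟨c, hcpos, fun f => ?_⟩
  set Df := SchwartzMap.fderivCLM ℝ E ℂ f with hDf
  have hDfapp : ∀ x : E, Df x = fderiv ℝ (⇑f) x := fun x => rfl
  set G1 : E → ℝ≥0∞ := fun x => ENNReal.ofReal (‖f x‖ ^ 2 / ‖x‖ ^ 2) with hG1
  set G2 : E → ℝ≥0∞ := fun x => ENNReal.ofReal (‖Df x‖ ^ 2) with hG2
  have hG1m : Measurable G1 :=
    (((f.continuous.norm.pow 2).measurable).div ((continuous_norm.pow 2)).measurable).ennreal_ofReal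
  have hG2m : Measurable G2 := ((Df.continuous.norm.pow 2).measurable).ennreal_ofReal
  have hfr : Module.finrank ℝ E = n := finrank_euclideanSpace_fin
  -- polar decompositions
  have hpolar1 : ∫⁻ x, G1 x = ∫⁻ ω : sphere (0:E) 1, ∫⁻ r in Ioi (0:ℝ),
      ENNReal.ofReal (r ^ (n-3) * ‖f (r • (ω:E))‖ ^ 2) ∂volume ∂(volume : Measure E).toSphere := by
    rw [lintegral_polar (volume : Measure E) G1 hG1m]
    refine lintegral_congr fun ω => ?_
    refine setLIntegral_congr_fun measurableSet_Ioi (fun r hr => ?_)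
    have hω : ‖(ω:E)‖ = 1 := mem_sphere_zero_iff_norm.mp ω.2
    have hr0 : (0:ℝ) < r := hr
    have hnorm : ‖r • (ω:E)‖ = r := by
      rw [norm_smul, hω, mul_one, Real.norm_eq_abs, abs_of_pos hr0]
    simp only [hfr, hG1]
    rw [hnorm, ← ENNReal.ofReal_mul (by positivity)]
    congr 1
    have hpow : r ^ (n-1) = r ^ (n-3) * r ^ 2 := by
      rw [← pow_add]
      congr 1
      omega
    rw [hpow]
    field_simp
  have hpolar2 : ∫⁻ x, G2 x = ∫⁻ ω : sphere (0:E) 1, ∫⁻ r in Ioi (0:ℝ),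
      ENNReal.ofReal (r ^ (n-1) * ‖Df (r • (ω:E))‖ ^ 2) ∂volume ∂(volume : Measure E).toSphere := by
    rw [lintegral_polar (volume : Measure E) G2 hG2m]
    refine lintegral_congr fun ω => ?_
    refine setLIntegral_congr_fun measurableSet_Ioi (fun r hr => ?_)
    have hr0 : (0:ℝ) < r := hr
    simp only [hfr, hG2]
    rw [← ENNReal.ofReal_mul (by positivity)]
  -- the key inequality in ℝ≥0∞
  have hkey : ∫⁻ x, G1 x ≤ ENNReal.ofReal (c ^ 2) * ∫⁻ x, G2 x := by
    rw [hpolar1, hpolar2, ← lintegral_const_mul' _ _ ENNReal.ofReal_ne_top]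
    refine lintegral_mono fun ω => ?_
    have hω : ‖(ω:E)‖ = 1 := mem_sphere_zero_iff_norm.mp ω.2
    exact hardy_1d_ennreal n hn f hω
  -- finiteness of the RHS
  have hDfint : Integrable (fun x : E => ‖Df x‖ ^ 2) := by
    obtain ⟨C₀, hC₀, hb⟩ := Df.decay 0 0
    refine Integrable.mono' (Df.integrable.norm.const_mul C₀)
      (Df.continuous.norm.pow 2).aestronglyMeasurable ?_
    refine Eventually.of_forall fun x => ?_
    rw [Real.norm_eq_abs, abs_of_nonneg (by positivity), sq]
    have := hb x
    rw [norm_iteratedFDeriv_zero] at this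
    simp only [pow_zero, one_mul] at this
    exact mul_le_mul_of_nonneg_right this (norm_nonneg _)
  have hG2eq : ∫⁻ x, G2 x = ENNReal.ofReal (∫ x, ‖Df x‖ ^ 2) := by
    rw [hG2, ← ofReal_integral_eq_lintegral_ofReal hDfint
      (Eventually.of_forall fun x => by positivity)]
  have hG2ne : ∫⁻ x, G2 x ≠ ⊤ := by rw [hG2eq]; exact ENNReal.ofReal_ne_top
  -- Bochner ↔ lintegral
  have hB1 : ∫ x, ‖f x‖ ^ 2 / ‖x‖ ^ 2 = (∫⁻ x, G1 x).toReal := by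
    rw [integral_eq_lintegral_of_nonneg_ae (f := fun x => ‖f x‖ ^ 2 / ‖x‖ ^ 2) (Eventually.of_forall fun x => by positivity)
      ((f.continuous.norm.pow 2).measurable.div
        ((continuous_norm.pow 2)).measurable).aestronglyMeasurable]
  have hB2 : ∫ x, ‖fderiv ℝ (⇑f) x‖ ^ 2 = (∫⁻ x, G2 x).toReal := by
    rw [hG2eq, ENNReal.toReal_ofReal (integral_nonneg fun x => by positivity)]
    rfl
  rw [hB1, hB2]
  have hle : (∫⁻ x, G1 x).toReal ≤ c ^ 2 * (∫⁻ x, G2 x).toReal := by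
    have h1 : ((ENNReal.ofReal (c ^ 2)) * ∫⁻ x, G2 x).toReal
        = c ^ 2 * (∫⁻ x, G2 x).toReal := by
      rw [ENNReal.toReal_mul, ENNReal.toReal_ofReal (by positivity)]
    rw [← h1]
    exact ENNReal.toReal_mono (ENNReal.mul_ne_top ENNReal.ofReal_ne_top hG2ne) hkey
  calc Real.sqrt (∫⁻ x, G1 x).toReal ≤ Real.sqrt (c ^ 2 * (∫⁻ x, G2 x).toReal) :=
        Real.sqrt_le_sqrt hle
    _ = c * Real.sqrt (∫⁻ x, G2 x).toReal := by
        rw [Real.sqrt_mul (by positivity), Real.sqrt_sq hcpos.le]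


end
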